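/- Let p > 1, c₁ > 0 and let k ≥ 2 be an integer. Then there exists a unique vector (ᾱ₁,…,ᾱ_k) ∈ ℝ^k with ᾱ₁ + ⋯ + ᾱ_k = 0 such that the functions ζ̄_i(s) = ( i − (k+1)/2 ) · ((p−1)/2) · log s + ᾱ_i, for i = 1,…,k, satisfy for all s > 0 and all i ∈ {1,…,k}: (1/c₁) ζ̄_i'(s) = e^{ −(2/(p−1))( ζ̄_i(s) − ζ̄_{i−1}(s) ) } − e^{ −(2/(p−1))( ζ̄_{i+1}(s) − ζ̄_i(s) ) }, where by convention the first exponential term is replaced by 0 when i = 1 and the second exponential term is replaced by 0 when i = k. -/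

import Mathlib

open Real

noncomputable def zbar (p : ℝ) (k : ℕ) (α : Fin k → ℝ) (i : ℕ) (s : ℝ) : ℝ :=
  ((i : ℝ) - ((k : ℝ) + 1) / 2) * ((p - 1) / 2) * Real.log s
    + (if h : 1 ≤ i ∧ i ≤ k then α ⟨i - 1, by omega⟩ else 0)

noncomputable def aval (p c₁ : ℝ) (k : ℕ) (i : ℕ) : ℝ :=
  (p - 1) / (2 * c₁) * i * ((k : ℝ) - i) / 2

noncomputable def ggap (p c₁ : ℝ) (k : ℕ) (i : ℕ) : ℝ :=
  -((p - 1) / 2) * Real.log (aval p c₁ k i)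

lemma aval_zero (p c₁ : ℝ) (k : ℕ) : aval p c₁ k 0 = 0 := by simp [aval]

lemma aval_k (p c₁ : ℝ) (k : ℕ) : aval p c₁ k k = 0 := by simp [aval]

lemma aval_pos {p c₁ : ℝ} (hp : 1 < p) (hc₁ : 0 < c₁) {k i : ℕ}
    (h1 : 1 ≤ i) (h2 : i < k) : 0 < aval p c₁ k i := by
  have h3 : (0:ℝ) < (p - 1) / (2 * c₁) := div_pos (by linarith) (by linarith)
  have h4 : (0:ℝ) < (i:ℝ) := by exact_mod_cast h1
  have h5 : (0:ℝ) < (k:ℝ) - (i:ℝ) := by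
    have : (i:ℝ) < (k:ℝ) := by exact_mod_cast h2
    linarith
  unfold aval
  positivity

lemma aval_sub {p c₁ : ℝ} (hc₁ : c₁ ≠ 0) (k : ℕ) {i : ℕ} (h1 : 1 ≤ i) :
    c₁ * (aval p c₁ k (i - 1) - aval p c₁ k i)
      = ((i:ℝ) - ((k:ℝ) + 1) / 2) * ((p - 1) / 2) := by
  have hcast : ((i - 1 : ℕ) : ℝ) = (i:ℝ) - 1 := by
    push_cast [Nat.cast_sub h1]; ring
  unfold aval
  rw [hcast]
  field_simp
  ring

lemma exp_ggap {p c₁ : ℝ} (hp : 1 < p) (hc₁ : 0 < c₁) {k i : ℕ}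
    (h1 : 1 ≤ i) (h2 : i < k) :
    Real.exp (-(2 / (p - 1)) * ggap p c₁ k i) = aval p c₁ k i := by
  have hne : p - 1 ≠ 0 := by linarith
  have : -(2 / (p - 1)) * ggap p c₁ k i = Real.log (aval p c₁ k i) := by
    unfold ggap; field_simp
  rw [this, Real.exp_log (aval_pos hp hc₁ h1 h2)]

lemma zbar_hasDeriv (p : ℝ) (k : ℕ) (α : Fin k → ℝ) (i : ℕ) {s : ℝ} (hs : 0 < s) :
    HasDerivAt (fun t => zbar p k α i t)
      (((i:ℝ) - ((k:ℝ) + 1) / 2) * ((p - 1) / 2) * s⁻¹) s := by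
  unfold zbar
  exact ((Real.hasDerivAt_log hs.ne').const_mul
    (((i:ℝ) - ((k:ℝ) + 1) / 2) * ((p - 1) / 2))).add_const _

lemma zbar_one (p : ℝ) (k : ℕ) (α : Fin k → ℝ) (i : ℕ) :
    zbar p k α i 1 = if h : 1 ≤ i ∧ i ≤ k then α ⟨i - 1, by omega⟩ else 0 := by
  simp [zbar]

lemma exp_term {p c₁ : ℝ} (hp : 1 < p) (hc₁ : 0 < c₁) {k : ℕ} (α : Fin k → ℝ)
    (hgap : ∀ j : ℕ, 1 ≤ j → ∀ h : j < k, α ⟨j, h⟩ - α ⟨j - 1, by omega⟩ = ggap p c₁ k j)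
    {j : ℕ} (hj1 : 1 ≤ j) (hjk : j < k) {s : ℝ} (hs : 0 < s) :
    Real.exp (-(2 / (p - 1)) * (zbar p k α (j + 1) s - zbar p k α j s))
      = aval p c₁ k j * s⁻¹ := by
  have hne : p - 1 ≠ 0 := by linarith
  have e1 : zbar p k α (j + 1) s - zbar p k α j s
      = (p - 1) / 2 * Real.log s + ggap p c₁ k j := by
    have hα := hgap j hj1 hjk
    unfold zbar
    rw [dif_pos (by omega : 1 ≤ j + 1 ∧ j + 1 ≤ k), dif_pos (by omega : 1 ≤ j ∧ j ≤ k)]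
    simp only [Nat.add_sub_cancel]
    push_cast
    linear_combination hα
  have e2 : -(2 / (p - 1)) * ((p - 1) / 2 * Real.log s + ggap p c₁ k j)
      = -Real.log s + -(2 / (p - 1)) * ggap p c₁ k j := by
    field_simp; ring
  rw [e1, e2, Real.exp_add, Real.exp_neg, Real.exp_log hs,
    exp_ggap hp hc₁ hj1 hjk, mul_comm]

lemma rhs_eval {p c₁ : ℝ} (hp : 1 < p) (hc₁ : 0 < c₁) {k : ℕ} (α : Fin k → ℝ)
    (hgap : ∀ j : ℕ, 1 ≤ j → ∀ h : j < k, α ⟨j, h⟩ - α ⟨j - 1, by omega⟩ = ggap p c₁ k j)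
    {i : ℕ} (h1 : 1 ≤ i) (h2 : i ≤ k) {s : ℝ} (hs : 0 < s) :
    (c₁ *
      ((if i = 1 then 0
        else Real.exp (-(2 / (p - 1)) * (zbar p k α i s - zbar p k α (i - 1) s)))
      - (if i = k then 0
        else Real.exp (-(2 / (p - 1)) * (zbar p k α (i + 1) s - zbar p k α i s)))))
      = ((i:ℝ) - ((k:ℝ) + 1) / 2) * ((p - 1) / 2) * s⁻¹ := by
  have hF1 : (if i = 1 then (0:ℝ)
      else Real.exp (-(2 / (p - 1)) * (zbar p k α i s - zbar p k α (i - 1) s)))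
      = aval p c₁ k (i - 1) * s⁻¹ := by
    by_cases h : i = 1
    · simp [h, aval_zero]
    · rw [if_neg h]
      obtain ⟨j, rfl⟩ : ∃ j, i = j + 1 := ⟨i - 1, by omega⟩
      simp only [Nat.add_sub_cancel]
      exact exp_term hp hc₁ α hgap (by omega) (by omega) hs
  have hF2 : (if i = k then (0:ℝ)
      else Real.exp (-(2 / (p - 1)) * (zbar p k α (i + 1) s - zbar p k α i s)))
      = aval p c₁ k i * s⁻¹ := by
    by_cases h : i = k
    · simp [h, aval_k]
    · rw [if_neg h]
      exact exp_term hp hc₁ α hgap h1 (by omega) hs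
  rw [hF1, hF2]
  have h := aval_sub (p := p) hc₁.ne' k h1
  linear_combination s⁻¹ * h

lemma gaps_of_ode {p c₁ : ℝ} (hp : 1 < p) (hc₁ : 0 < c₁) {k : ℕ} (hk : 2 ≤ k)
    (α : Fin k → ℝ)
    (hode : ∀ s : ℝ, 0 < s → ∀ i : ℕ, 1 ≤ i → i ≤ k →
      HasDerivAt (fun t => zbar p k α i t)
        (c₁ *
          ((if i = 1 then 0
            else Real.exp (-(2 / (p - 1)) * (zbar p k α i s - zbar p k α (i - 1) s)))
          - (if i = k then 0
            else Real.exp (-(2 / (p - 1)) * (zbar p k α (i + 1) s - zbar p k α i s))))) s) :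
    ∀ j : ℕ, 1 ≤ j → ∀ h : j < k, α ⟨j, h⟩ - α ⟨j - 1, by omega⟩ = ggap p c₁ k j := by
  have hne : p - 1 ≠ 0 := by linarith
  set E : ℕ → ℝ := fun j =>
    if h : 1 ≤ j ∧ j + 1 ≤ k then
      Real.exp (-(2 / (p - 1)) * (α ⟨j, by omega⟩ - α ⟨j - 1, by omega⟩)) else 0 with hE
  have hEeq : ∀ j : ℕ, (h : 1 ≤ j ∧ j + 1 ≤ k) →
      E j = Real.exp (-(2 / (p - 1)) * (α ⟨j, by omega⟩ - α ⟨j - 1, by omega⟩)) :=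
    fun j h => dif_pos h
  have hEneg : ∀ j : ℕ, ¬(1 ≤ j ∧ j + 1 ≤ k) → E j = 0 := fun j h => dif_neg h
  have hrec : ∀ i : ℕ, 1 ≤ i → i ≤ k →
      c₁ * (E (i - 1) - E i) = ((i:ℝ) - ((k:ℝ) + 1) / 2) * ((p - 1) / 2) := by
    intro i h1 h2
    have hd := (hode 1 one_pos i h1 h2).unique (zbar_hasDeriv p k α i one_pos)
    rw [inv_one, mul_one] at hd
    rw [← hd]
    congr 1
    have hT1 : (if i = 1 then (0:ℝ)
        else Real.exp (-(2 / (p - 1)) * (zbar p k α i 1 - zbar p k α (i - 1) 1)))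
        = E (i - 1) := by
      by_cases h : i = 1
      · rw [if_pos h, h]
        exact (hEneg 0 (by omega)).symm
      · rw [if_neg h, zbar_one, zbar_one, dif_pos (show 1 ≤ i ∧ i ≤ k by omega),
          dif_pos (show 1 ≤ i - 1 ∧ i - 1 ≤ k by omega),
          hEeq (i - 1) (by omega)]
    have hT2 : (if i = k then (0:ℝ)
        else Real.exp (-(2 / (p - 1)) * (zbar p k α (i + 1) 1 - zbar p k α i 1)))
        = E i := by
      by_cases h : i = k
      · rw [if_pos h, h]
        exact (hEneg k (by omega)).symm
      · rw [if_neg h, zbar_one, zbar_one, dif_pos (show 1 ≤ i + 1 ∧ i + 1 ≤ k by omega),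
          dif_pos (show 1 ≤ i ∧ i ≤ k by omega),
          hEeq i (by omega)]
        simp only [Nat.add_sub_cancel]
    rw [hT1, hT2]
  have hEa : ∀ j : ℕ, j + 1 ≤ k → E j = aval p c₁ k j := by
    intro j
    induction j with
    | zero =>
      intro _
      rw [hEneg 0 (by omega), aval_zero]
    | succ n ih =>
      intro h
      have hn := ih (by omega)
      have hr := hrec (n + 1) (by omega) (by omega)
      have hs := aval_sub (p := p) hc₁.ne' k (i := n + 1) (by omega)
      simp only [Nat.add_sub_cancel] at hr hs
      rw [hn] at hr
      have := mul_left_cancel₀ hc₁.ne' (hr.trans hs.symm)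
      linarith
  intro j hj1 hjk
  have hEj := (hEeq j (by omega)).symm.trans (hEa j (by omega))
  have hX : -(2 / (p - 1)) * (α ⟨j, by omega⟩ - α ⟨j - 1, by omega⟩)
      = Real.log (aval p c₁ k j) := by
    rw [← Real.log_exp (-(2 / (p - 1)) * (α ⟨j, by omega⟩ - α ⟨j - 1, by omega⟩)), hEj]
  have h2 : α ⟨j, by omega⟩ - α ⟨j - 1, by omega⟩
      = -((p - 1) / 2) * (-(2 / (p - 1)) * (α ⟨j, by omega⟩ - α ⟨j - 1, by omega⟩)) := by
    field_simp
  rw [hX] at h2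
  exact h2

noncomputable def αsol (p c₁ : ℝ) (k : ℕ) : Fin k → ℝ := fun i =>
  (∑ j ∈ Finset.range i.val, ggap p c₁ k (j + 1))
    - (∑ j ∈ Finset.range k, ∑ m ∈ Finset.range j, ggap p c₁ k (m + 1)) / k

lemma αsol_sum (p c₁ : ℝ) {k : ℕ} (hk : 2 ≤ k) : ∑ i, αsol p c₁ k i = 0 := by
  have hk0 : (k:ℝ) ≠ 0 := by
    have : 0 < k := by omega
    positivity
  have h1 : ∑ i, αsol p c₁ k i
      = ∑ n ∈ Finset.range k, ((∑ j ∈ Finset.range n, ggap p c₁ k (j + 1))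
        - (∑ j ∈ Finset.range k, ∑ m ∈ Finset.range j, ggap p c₁ k (m + 1)) / k) :=
    Fin.sum_univ_eq_sum_range (fun n => (∑ j ∈ Finset.range n, ggap p c₁ k (j + 1))
      - (∑ j ∈ Finset.range k, ∑ m ∈ Finset.range j, ggap p c₁ k (m + 1)) / k) k
  rw [h1, Finset.sum_sub_distrib, Finset.sum_const, Finset.card_range, nsmul_eq_mul]
  field_simp
  ring

lemma αsol_gaps (p c₁ : ℝ) {k : ℕ} (hk : 2 ≤ k) :
    ∀ j : ℕ, 1 ≤ j → ∀ h : j < k,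
      αsol p c₁ k ⟨j, h⟩ - αsol p c₁ k ⟨j - 1, by omega⟩ = ggap p c₁ k j := by
  intro j hj1 hjk
  obtain ⟨n, rfl⟩ : ∃ n, j = n + 1 := ⟨j - 1, by omega⟩
  simp only [Nat.add_sub_cancel, αsol]
  rw [Finset.sum_range_succ]
  ring

/-- There is a unique vector `(ᾱ₁,…,ᾱ_k)` with zero sum such that the functions
`ζ̄_i(s) = (i - (k+1)/2)((p-1)/2) log s + ᾱ_i` solve the ODE system
`(1/c₁) ζ̄_i' = e^{-(2/(p-1))(ζ̄_i - ζ̄_{i-1})} - e^{-(2/(p-1))(ζ̄_{i+1} - ζ̄_i)}`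
for all `s > 0` and `i = 1,…,k`, where the first exponential is replaced by `0`
when `i = 1` and the second one by `0` when `i = k`. -/
theorem unique_explicit_soliton_centers (p c₁ : ℝ) (hp : 1 < p) (hc₁ : 0 < c₁)
    (k : ℕ) (hk : 2 ≤ k) :
    ∃! α : Fin k → ℝ,
      (∑ i, α i = 0) ∧
      ∀ s : ℝ, 0 < s → ∀ i : ℕ, 1 ≤ i → i ≤ k →
        HasDerivAt (fun t => zbar p k α i t)
          (c₁ *
            ((if i = 1 then 0
              else Real.exp (-(2 / (p - 1)) * (zbar p k α i s - zbar p k α (i - 1) s)))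
            - (if i = k then 0
              else Real.exp (-(2 / (p - 1)) * (zbar p k α (i + 1) s - zbar p k α i s))))) s := by
  refine ⟨αsol p c₁ k, ⟨αsol_sum p c₁ hk, ?_⟩, ?_⟩
  · intro s hs i h1 h2
    have hd := zbar_hasDeriv p k (αsol p c₁ k) i hs
    rwa [← rhs_eval hp hc₁ (αsol p c₁ k) (αsol_gaps p c₁ hk) h1 h2 hs] at hd
  · rintro α ⟨hsum, hode⟩
    have hg := gaps_of_ode hp hc₁ hk α hode
    have hg' := αsol_gaps p c₁ hk
    have hconst : ∀ n : ℕ, ∀ h : n < k, α ⟨n, h⟩ - αsol p c₁ k ⟨n, h⟩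
        = α ⟨0, by omega⟩ - αsol p c₁ k ⟨0, by omega⟩ := by
      intro n
      induction n with
      | zero => intro h; rfl
      | succ m ih =>
        intro h
        have hm := ih (by omega)
        have h1 := hg (m + 1) (by omega) h
        have h2 := hg' (m + 1) (by omega) h
        simp only [Nat.add_sub_cancel] at h1 h2
        linarith
    have hsumdiff : ∑ i : Fin k, (α i - αsol p c₁ k i) = 0 := by
      rw [Finset.sum_sub_distrib, hsum, αsol_sum p c₁ hk]; ring
    have hC : ∑ i : Fin k, (α i - αsol p c₁ k i)
        = k * (α ⟨0, by omega⟩ - αsol p c₁ k ⟨0, by omega⟩) := by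
      have heach : ∀ i : Fin k,
          α i - αsol p c₁ k i = α ⟨0, by omega⟩ - αsol p c₁ k ⟨0, by omega⟩ := by
        intro i
        have := hconst i.val i.isLt
        simpa using this
      rw [Finset.sum_congr rfl (fun i _ => heach i), Finset.sum_const]
      simp [mul_comm]
    have h0 : α ⟨0, by omega⟩ - αsol p c₁ k ⟨0, by omega⟩ = 0 := by
      rw [hsumdiff] at hC
      rcases mul_eq_zero.mp hC.symm with h | h
      · exact absurd h (by
          have : 0 < k := by omega
          positivity)
      · exact h
    funext i
    have hi := hconst i.val i.isLt
    rw [h0] at hi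
    have : α i - αsol p c₁ k i = 0 := by simpa using hi
    linarith
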